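/- Assume Vaughan's bound: for all real β, if a, q are coprime positive integers with |β − a/q| < 1/q² then |S₁(β)| ≪ (X q^{−1/2} + X^{1/2} q^{1/2} + X^{4/5})(log X)⁴. Let λ ≠ 0 be real, X ≥ Z ≥ X^{4/5}(log X)⁵, and suppose |S₁(λα)| > Z. Then there exist coprime integers a, q with 1 ≤ q ≪ (X (log X)⁴ / Z)² and |qλα − a| ≪ X (log X)^{10} / Z². -/

import Mathlib

open Real MeasureTheory

/-- `e(x) = exp(2πix)` -/
noncomputable def e (x : ℝ) : ℂ := Complex.exp (2 * Real.pi * Complex.I * x)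

/-- `S₁(α) = Σ_{δX ≤ p ≤ X} (log p) e(pα)`, sum over primes `p`. -/
noncomputable def S1 (δ X : ℝ) (α : ℝ) : ℂ :=
  ∑ p ∈ (Finset.Icc 1 (Nat.floor X)).filter
      (fun p : ℕ => p.Prime ∧ δ * X ≤ (p : ℝ) ∧ (p : ℝ) ≤ X),
    (Real.log p : ℂ) * e ((p : ℝ) * α)

lemma e_add_int (x : ℝ) (m : ℤ) : e (x + m) = e x := by
  unfold e
  rw [show ((x + m : ℝ) : ℂ) = (x : ℂ) + m by push_cast; ring, mul_add,
    Complex.exp_add, show 2 * (Real.pi : ℂ) * Complex.I * m = m * (2 * Real.pi * Complex.I) by ring,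
    Complex.exp_int_mul_two_pi_mul_I, mul_one]

lemma S1_add_int (δ X β : ℝ) (k : ℤ) : S1 δ X (β + k) = S1 δ X β := by
  unfold S1
  refine Finset.sum_congr rfl fun p _ => ?_
  congr 1
  rw [show (p : ℝ) * (β + k) = p * β + ((p : ℤ) * k : ℤ) by push_cast; ring, e_add_int]

set_option maxHeartbeats 1000000 in
theorem harman_dirichlet (δ : ℝ) (hδ0 : 0 < δ) (hδ1 : δ < 1) (C : ℝ) (hC : 0 < C)
    (hVaughan : ∀ X ≥ (2 : ℝ), ∀ α : ℝ, ∀ a q : ℕ, 0 < a → 0 < q → Nat.gcd a q = 1 →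
      |α - (a : ℝ) / q| < 1 / (q : ℝ) ^ 2 →
      ‖S1 δ X α‖ ≤ C * (X * (q : ℝ) ^ (-(1 : ℝ) / 2) + X ^ ((1 : ℝ) / 2) * (q : ℝ) ^ ((1 : ℝ) / 2)
        + X ^ ((4 : ℝ) / 5)) * Real.log X ^ 4)
    (l : ℝ) (hl : l ≠ 0) :
    ∃ C₁ > 0, ∃ C₂ > 0, ∃ X₀ : ℝ, ∀ X ≥ X₀, ∀ α Z : ℝ,
      X ^ ((4 : ℝ) / 5) * Real.log X ^ 5 ≤ Z → Z ≤ X → Z < ‖S1 δ X (l * α)‖ →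
      ∃ a : ℤ, ∃ q : ℕ, 0 < q ∧ Int.gcd a q = 1 ∧
        (q : ℝ) ≤ C₁ * (X * Real.log X ^ 4 / Z) ^ 2 ∧
        |(q : ℝ) * l * α - a| ≤ C₂ * X * Real.log X ^ 10 / Z ^ 2 := by
  refine ⟨9 * C ^ 2 + 1, by positivity, 2, by norm_num, Real.exp (3 * C + 3), ?_⟩
  intro X hX α Z hZ1 hZX hZS
  set L := Real.log X with hLdef
  have hL : 3 * C + 3 ≤ L := by
    rw [hLdef, ← Real.log_exp (3 * C + 3)]
    exact Real.log_le_log (Real.exp_pos _) hX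
  have hL3 : (3 : ℝ) ≤ L := by linarith
  have hL0 : (0 : ℝ) < L := by linarith
  have hX2 : (2 : ℝ) ≤ X := by
    have h1 : (3 : ℝ) ≤ 3 * C + 3 := by linarith
    have := Real.add_one_le_exp (3 * C + 3)
    linarith
  have hX0 : (0 : ℝ) < X := by linarith
  have hX1 : (1 : ℝ) ≤ X := by linarith
  have hX45 : (0 : ℝ) < X ^ ((4 : ℝ) / 5) := Real.rpow_pos_of_pos hX0 _
  have hZ0 : (0 : ℝ) < Z := lt_of_lt_of_le (by positivity) hZ1
  -- v := Z² / (X L¹⁰)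
  set v : ℝ := Z ^ 2 / (X * L ^ 10) with hvdef
  have hXL0 : (0 : ℝ) < X * L ^ 10 := by positivity
  have hZ2 : X * L ^ 10 ≤ Z ^ 2 := by
    have h85 : X ≤ X ^ ((8 : ℝ) / 5) := by
      calc X = X ^ (1 : ℝ) := (Real.rpow_one X).symm
        _ ≤ X ^ ((8 : ℝ) / 5) := Real.rpow_le_rpow_of_exponent_le hX1 (by norm_num)
    have hsq : X ^ ((4 : ℝ) / 5) * X ^ ((4 : ℝ) / 5) = X ^ ((8 : ℝ) / 5) := by
      rw [← Real.rpow_add hX0]; norm_num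
    have h1 : X * L ^ 10 ≤ X ^ ((8 : ℝ) / 5) * L ^ 10 :=
      mul_le_mul_of_nonneg_right h85 (by positivity)
    have h2 : X ^ ((8 : ℝ) / 5) * L ^ 10 = (X ^ ((4 : ℝ) / 5) * L ^ 5) ^ 2 := by
      rw [← hsq]; ring
    have h3 : (X ^ ((4 : ℝ) / 5) * L ^ 5) ^ 2 ≤ Z ^ 2 :=
      pow_le_pow_left₀ (by positivity) hZ1 2
    linarith [h2 ▸ h3]
  have hv1 : (1 : ℝ) ≤ v := (one_le_div hXL0).mpr hZ2
  set N : ℕ := Nat.floor v with hNdef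
  have hN1 : 1 ≤ N := Nat.le_floor (by exact_mod_cast hv1)
  have hN0 : 0 < N := hN1
  obtain ⟨r, hr1, hr2⟩ := Real.exists_rat_abs_sub_le_and_den_le (l * α) hN0
  set q : ℕ := r.den with hqdef
  set a : ℤ := r.num with hadef
  have hq0 : 0 < q := r.pos
  have hQ0 : (0 : ℝ) < (q : ℝ) := by exact_mod_cast hq0
  have hNv : (N : ℝ) ≤ v := Nat.floor_le (by positivity)
  have hvN : v < N + 1 := Nat.lt_floor_add_one v
  have hqN : (q : ℝ) ≤ N := by exact_mod_cast hr2
  have hqv : (q : ℝ) ≤ v := hqN.trans hNv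
  have hrcast : (r : ℝ) = (a : ℝ) / q := by rw [Rat.cast_def]
  have hr1' : |l * α - (a : ℝ) / q| ≤ 1 / ((N + 1) * q) := by rwa [hrcast] at hr1
  -- |q·lα − a| ≤ 1/(N+1)
  have habs : |(q : ℝ) * (l * α) - a| ≤ 1 / (N + 1) := by
    have heq : (q : ℝ) * (l * α) - a = (q : ℝ) * (l * α - (a : ℝ) / q) := by
      field_simp
    rw [heq, abs_mul, abs_of_pos hQ0]
    calc (q : ℝ) * |l * α - (a : ℝ) / q| ≤ (q : ℝ) * (1 / ((N + 1) * q)) :=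
          mul_le_mul_of_nonneg_left hr1' hQ0.le
      _ = 1 / (N + 1) := by field_simp
  -- |lα − a/q| < 1/q²
  have hfrac : |l * α - (a : ℝ) / q| < 1 / (q : ℝ) ^ 2 := by
    refine lt_of_le_of_lt hr1' ?_
    rw [div_lt_div_iff₀ (by positivity) (by positivity)]
    have : (q : ℝ) < N + 1 := by linarith
    nlinarith
  -- final abs bound used in both cases
  have habs2 : |(q : ℝ) * (l * α) - a| ≤ 2 * X * L ^ 10 / Z ^ 2 := by
    have h1 : 1 / ((N : ℝ) + 1) ≤ 1 / v := by
      apply one_div_le_one_div_of_le (by positivity)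
      linarith
    have h2 : 1 / v = X * L ^ 10 / Z ^ 2 := by
      rw [hvdef, one_div_div]
    have h3 : 0 ≤ X * L ^ 10 / Z ^ 2 := by positivity
    have : 2 * X * L ^ 10 / Z ^ 2 = 2 * (X * L ^ 10 / Z ^ 2) := by ring
    rw [this]
    linarith [habs, h1, h2 ▸ h1]
  have hgcdaq : Int.gcd a q = 1 := r.reduced
  by_cases hq : (q : ℝ) ≤ (9 * C ^ 2 + 1) * (X * L ^ 4 / Z) ^ 2
  · exact ⟨a, q, hq0, hgcdaq, hq, by rwa [mul_assoc] ⟩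
  · exfalso
    push_neg at hq
    -- shift to get a positive numerator
    set k : ℤ := a.natAbs + 1 with hkdef
    have hq1 : (1 : ℤ) ≤ q := by exact_mod_cast hq0
    have ha'int : 0 < a + k * q := by
      have h1 : -a ≤ (a.natAbs : ℤ) := by omega
      nlinarith [mul_le_mul_of_nonneg_left hq1 (show (0:ℤ) ≤ (a.natAbs : ℤ) + 1 by positivity)]
    set a' : ℕ := (a + k * q).toNat with ha'def
    have ha'cast : (a' : ℤ) = a + k * q := Int.toNat_of_nonneg ha'int.le
    have ha'pos : 0 < a' := by omega
    have hgcd' : Nat.gcd a' q = 1 := by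
      have hcop : IsCoprime a (q : ℤ) := Int.isCoprime_iff_gcd_eq_one.mpr hgcdaq
      have hcop' : IsCoprime ((a' : ℤ)) (q : ℤ) := by
        rw [ha'cast, show a + k * q = a + (q : ℤ) * k by ring]
        exact hcop.add_mul_left_left k
      have := Int.isCoprime_iff_gcd_eq_one.mp hcop'
      simpa [Int.gcd_natCast_natCast] using this
    have ha'real : (a' : ℝ) = (a : ℝ) + (k : ℝ) * q := by exact_mod_cast ha'cast
    have hfrac' : |l * α + (k : ℝ) - (a' : ℝ) / q| < 1 / (q : ℝ) ^ 2 := by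
      have : l * α + (k : ℝ) - (a' : ℝ) / q = l * α - (a : ℝ) / q := by
        rw [ha'real]; field_simp; ring
      rwa [this]
    have hS := hVaughan X hX2 (l * α + (k : ℝ)) a' q ha'pos hq0 hgcd' hfrac'
    rw [show l * α + (k : ℝ) = l * α + (k : ℤ) by norm_num, S1_add_int] at hS
    have hZS' : Z < C * (X * (q : ℝ) ^ (-(1 : ℝ) / 2) + X ^ ((1 : ℝ) / 2) * (q : ℝ) ^ ((1 : ℝ) / 2)
        + X ^ ((4 : ℝ) / 5)) * L ^ 4 := lt_of_lt_of_le hZS hS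
    -- term 1
    have ht1 : C * (X * (q : ℝ) ^ (-(1 : ℝ) / 2)) * L ^ 4 < Z / 3 := by
      have hB0 : (0 : ℝ) < 3 * C * X * L ^ 4 / Z := by positivity
      have hBsq : (3 * C * X * L ^ 4 / Z) ^ 2 < (q : ℝ) := by
        have h9 : (3 * C * X * L ^ 4 / Z) ^ 2 = 9 * C ^ 2 * (X * L ^ 4 / Z) ^ 2 := by ring
        nlinarith [sq_nonneg (X * L ^ 4 / Z)]
      have hBlt : 3 * C * X * L ^ 4 / Z < Real.sqrt q := (Real.lt_sqrt hB0.le).mpr hBsq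
      have hrp : (q : ℝ) ^ (-(1 : ℝ) / 2) = (Real.sqrt q)⁻¹ := by
        rw [show -(1 : ℝ) / 2 = -(1 / 2) by norm_num, Real.rpow_neg hQ0.le,
          ← Real.sqrt_eq_rpow]
      have hinv : (Real.sqrt q)⁻¹ < (3 * C * X * L ^ 4 / Z)⁻¹ := inv_strictAnti₀ hB0 hBlt
      have hinv' : (Real.sqrt q)⁻¹ < Z / (3 * C * X * L ^ 4) := by
        rwa [show (3 * C * X * L ^ 4 / Z)⁻¹ = Z / (3 * C * X * L ^ 4) by
          rw [inv_div]] at hinv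
      rw [hrp]
      have hmul := mul_lt_mul_of_pos_left hinv' (show (0:ℝ) < C * X * L ^ 4 by positivity)
      have heq : C * X * L ^ 4 * (Z / (3 * C * X * L ^ 4)) = Z / 3 := by
        field_simp
      calc C * (X * (Real.sqrt q)⁻¹) * L ^ 4 = C * X * L ^ 4 * (Real.sqrt q)⁻¹ := by ring
        _ < C * X * L ^ 4 * (Z / (3 * C * X * L ^ 4)) := hmul
        _ = Z / 3 := heq
    -- term 2
    have ht2 : C * (X ^ ((1 : ℝ) / 2) * (q : ℝ) ^ ((1 : ℝ) / 2)) * L ^ 4 ≤ Z / 3 := by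
      have hXQ : X * (q : ℝ) ≤ Z ^ 2 / L ^ 10 := by
        have h1 := mul_le_mul_of_nonneg_left hqv hX0.le
        have h2 : X * (Z ^ 2 / (X * L ^ 10)) = Z ^ 2 / L ^ 10 := by
          field_simp
        linarith [h2 ▸ h1]
      have hs : X ^ ((1 : ℝ) / 2) * (q : ℝ) ^ ((1 : ℝ) / 2) ≤ Z / L ^ 5 := by
        rw [← Real.sqrt_eq_rpow, ← Real.sqrt_eq_rpow, ← Real.sqrt_mul hX0.le]
        have h2 : Z ^ 2 / L ^ 10 = (Z / L ^ 5) ^ 2 := by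
          rw [div_pow, ← pow_mul]
        have h3 := Real.sqrt_le_sqrt (hXQ.trans_eq h2)
        rwa [Real.sqrt_sq (by positivity)] at h3
      have h1 : C * (X ^ ((1 : ℝ) / 2) * (q : ℝ) ^ ((1 : ℝ) / 2)) * L ^ 4
          ≤ C * (Z / L ^ 5) * L ^ 4 :=
        mul_le_mul_of_nonneg_right (mul_le_mul_of_nonneg_left hs hC.le) (by positivity)
      have h2 : C * (Z / L ^ 5) * L ^ 4 = C * Z / L := by
        field_simp
      have h3 : C * Z / L ≤ Z / 3 := by
        rw [div_le_div_iff₀ hL0 (by norm_num : (0:ℝ) < 3)]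
        nlinarith [mul_le_mul_of_nonneg_left (show 3 * C ≤ L by linarith) hZ0.le]
      linarith
    -- term 3
    have ht3 : C * X ^ ((4 : ℝ) / 5) * L ^ 4 ≤ Z / 3 := by
      have h1 : 3 * C * (X ^ ((4 : ℝ) / 5) * L ^ 4) ≤ L * (X ^ ((4 : ℝ) / 5) * L ^ 4) :=
        mul_le_mul_of_nonneg_right (by linarith) (by positivity)
      have h2 : L * (X ^ ((4 : ℝ) / 5) * L ^ 4) = X ^ ((4 : ℝ) / 5) * L ^ 5 := by ring
      linarith
    have hexp : C * (X * (q : ℝ) ^ (-(1 : ℝ) / 2) + X ^ ((1 : ℝ) / 2) * (q : ℝ) ^ ((1 : ℝ) / 2)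
        + X ^ ((4 : ℝ) / 5)) * L ^ 4
        = C * (X * (q : ℝ) ^ (-(1 : ℝ) / 2)) * L ^ 4
          + C * (X ^ ((1 : ℝ) / 2) * (q : ℝ) ^ ((1 : ℝ) / 2)) * L ^ 4
          + C * X ^ ((4 : ℝ) / 5) * L ^ 4 := by ring
    linarith [hexp ▸ hZS']
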